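/- Let Γ act on ℂ² as the group generated by m_θ(z₁,z₂) = (e^{iθ}z₁, e^{iθ}z₂) and ρ(z₁,z₂) = (−conj(z₂), conj(z₁)). Then the Γ-orbit of z ∈ ℂ² is {0} if z = 0, and if z ≠ 0 the orbit is the union of the two circles {m_θ z : θ ∈ ℝ} and {m_θ ρ(z) : θ ∈ ℝ}, which lie in orthogonal 2-dimensional planes of ℝ⁴. -/
import Mathlib

theorem stmt_8 (ρ : (ℂ × ℂ) ≃ₗᵢ[ℝ] (ℂ × ℂ)) (m : ℝ → ((ℂ × ℂ) ≃ₗᵢ[ℝ] (ℂ × ℂ)))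
    (hρ : ∀ z : ℂ × ℂ, ρ z = (-(starRingEnd ℂ z.2), starRingEnd ℂ z.1))
    (hm : ∀ (θ : ℝ) (z : ℂ × ℂ),
      m θ z = (Complex.exp (θ * Complex.I) * z.1, Complex.exp (θ * Complex.I) * z.2))
    (Γ : Subgroup ((ℂ × ℂ) ≃ₗᵢ[ℝ] (ℂ × ℂ)))
    (hΓ : Γ = Subgroup.closure ({ρ} ∪ Set.range m)) :
    ({w : ℂ × ℂ | ∃ g ∈ Γ, g 0 = w} = {0}) ∧
    ∀ z : ℂ × ℂ, z ≠ 0 →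
      ({w : ℂ × ℂ | ∃ g ∈ Γ, g z = w} =
        {w : ℂ × ℂ | ∃ θ : ℝ, w = m θ z} ∪ {w : ℂ × ℂ | ∃ θ : ℝ, w = m θ (ρ z)}) ∧
      (∀ w ∈ Submodule.span ℝ {w : ℂ × ℂ | ∃ θ : ℝ, w = m θ z},
       ∀ v ∈ Submodule.span ℝ {w : ℂ × ℂ | ∃ θ : ℝ, w = m θ (ρ z)},
        (w.1 * starRingEnd ℂ v.1 + w.2 * starRingEnd ℂ v.2).re = 0) := by
  have hmm : ∀ (θ φ : ℝ) (w : ℂ × ℂ), m θ (m φ w) = m (θ + φ) w := by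
    intro θ φ w
    have h : Complex.exp (θ * Complex.I) * Complex.exp (φ * Complex.I)
        = Complex.exp ((θ + φ : ℂ) * Complex.I) := by
      rw [← Complex.exp_add, add_mul]
    simp [hm, Prod.ext_iff, mul_assoc, ← h]
  have hm0 : ∀ w : ℂ × ℂ, m 0 w = w := by
    intro w; simp [hm, Prod.ext_iff]
  have hρm : ∀ (θ : ℝ) (w : ℂ × ℂ), ρ (m θ w) = m (-θ) (ρ w) := by
    intro θ w
    have h : (starRingEnd ℂ) (Complex.exp (θ * Complex.I))
        = Complex.exp (((-θ : ℝ)) * Complex.I) := by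
      rw [← Complex.exp_conj]; congr 1; push_cast; simp [Complex.conj_I]
    simp [hρ, hm, Prod.ext_iff, map_mul, h]
  have hρρ : ∀ w : ℂ × ℂ, ρ (ρ w) = m Real.pi w := by
    intro w
    simp [hρ, hm, Prod.ext_iff, Complex.exp_pi_mul_I]
  constructor
  · ext w
    simp only [Set.mem_setOf_eq, Set.mem_singleton_iff]
    constructor
    · rintro ⟨g, _, rfl⟩; exact map_zero g
    · rintro rfl; exact ⟨1, one_mem Γ, map_zero _⟩
  · intro z hz
    set S : Set (ℂ × ℂ) :=
      {w : ℂ × ℂ | ∃ θ : ℝ, w = m θ z} ∪ {w : ℂ × ℂ | ∃ θ : ℝ, w = m θ (ρ z)} with hS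
    have hSm : ∀ (θ : ℝ) (w : ℂ × ℂ), w ∈ S → m θ w ∈ S := by
      rintro θ w (⟨φ, rfl⟩ | ⟨φ, rfl⟩)
      · exact Or.inl ⟨θ + φ, hmm θ φ z⟩
      · exact Or.inr ⟨θ + φ, hmm θ φ (ρ z)⟩
    have hSρ : ∀ w : ℂ × ℂ, w ∈ S → ρ w ∈ S := by
      rintro w (⟨φ, rfl⟩ | ⟨φ, rfl⟩)
      · exact Or.inr ⟨-φ, hρm φ z⟩
      · refine Or.inl ⟨-φ + Real.pi, ?_⟩
        rw [hρm, hρρ, hmm]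
    have hP : ∀ g ∈ Γ, ∀ w : ℂ × ℂ, w ∈ S ↔ g w ∈ S := by
      rw [hΓ]
      intro g hg
      induction hg using Subgroup.closure_induction with
      | mem g hg =>
        rcases hg with hg | ⟨θ, rfl⟩
        · rw [Set.mem_singleton_iff] at hg; subst hg
          intro w
          refine ⟨hSρ w, fun h => ?_⟩
          have := hSρ _ h
          rw [hρρ] at this
          have := hSm (-Real.pi) _ this
          rwa [hmm, neg_add_cancel, hm0] at this
        · intro w
          refine ⟨hSm θ w, fun h => ?_⟩
          have := hSm (-θ) _ h
          rwa [hmm, neg_add_cancel, hm0] at this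
      | one => intro w; simp
      | mul g h _ _ hg hh =>
        intro w
        rw [hh w]
        exact hg (h w)
      | inv g _ hg =>
        intro w
        rw [hg (g⁻¹ w)]
        simp
    constructor
    · ext w
      simp only [Set.mem_setOf_eq]
      constructor
      · rintro ⟨g, hg, rfl⟩
        exact (hP g hg z).mp (Or.inl ⟨0, (hm0 z).symm⟩)
      · rintro (⟨θ, rfl⟩ | ⟨θ, rfl⟩)
        · exact ⟨m θ, hΓ ▸ Subgroup.subset_closure (Or.inr ⟨θ, rfl⟩), rfl⟩
        · refine ⟨m θ * ρ, mul_mem (hΓ ▸ Subgroup.subset_closure (Or.inr ⟨θ, rfl⟩))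
            (hΓ ▸ Subgroup.subset_closure (Or.inl rfl)), rfl⟩
    · have key : ∀ w ∈ Submodule.span ℝ {w : ℂ × ℂ | ∃ θ : ℝ, w = m θ z},
          ∀ v ∈ Submodule.span ℝ {w : ℂ × ℂ | ∃ θ : ℝ, w = m θ (ρ z)},
          w.1 * starRingEnd ℂ v.1 + w.2 * starRingEnd ℂ v.2 = 0 := by
        intro w hw
        induction hw using Submodule.span_induction with
        | mem w hwmem =>
          obtain ⟨θ, rfl⟩ := hwmem
          intro v hv
          induction hv using Submodule.span_induction with
          | mem v hvmem =>
            obtain ⟨φ, rfl⟩ := hvmem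
            simp only [hm, hρ, map_mul, map_neg, Complex.conj_conj]
            ring
          | zero => simp
          | add v v' _ _ hv hv' =>
            simp only [Prod.fst_add, Prod.snd_add, map_add]
            linear_combination hv + hv'
          | smul a v _ hv =>
            simp only [Prod.smul_fst, Prod.smul_snd, Complex.real_smul, map_mul,
              Complex.conj_ofReal]
            linear_combination (a : ℂ) * hv
        | zero => intro v hv; simp
        | add w w' _ _ hw hw' =>
          intro v hv
          simp only [Prod.fst_add, Prod.snd_add]
          linear_combination hw v hv + hw' v hv
        | smul a w _ hw =>
          intro v hv
          simp only [Prod.smul_fst, Prod.smul_snd, Complex.real_smul]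
          linear_combination (a : ℂ) * hw v hv
      intro w hw v hv
      rw [key w hw v hv, Complex.zero_re]
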